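/- Let Ω, Ω̄ : ℝ → ℂ be given in the reflectionless one-soliton case by Ω(y) = i e^{iy·i} = i e^{-y} and Ω̄(y) = -i e^{-y}, i.e. Ω(y) = C e^{iAy} B and Ω̄(y) = C̄ e^{-iĀy} B̄ with A = i, B = 1, C = i, Ā = -i, B̄ = 1, C̄ = -i. Define K₁(x,y) = -C̄ e^{-iĀx} Γ̄(x)⁻¹ e^{-iĀy} B̄ where Γ̄(x) = 1 - e^{-iĀx} M̄ A e^{2iAx} M e^{-iĀx}, M = -i/2, M̄ = i/2. Then K₁ satisfies the uncoupled Marchenko equation K₁(x,y) + Ω̄(x+y) + i ∫_x^∞ ∫_x^∞ K₁(x,z) Ω'(z+s) Ω̄(s+y) ds dz = 0 for all x < y. -/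
import Mathlib

open Complex MeasureTheory

lemma myexp2_tendsto : Filter.Tendsto (fun u : ℝ => -(Real.exp (-2*u)/2)) Filter.atTop (nhds 0) := by
  have h0 : Filter.Tendsto (fun u : ℝ => Real.exp (-2*u)) Filter.atTop (nhds 0) := by
    have := Real.tendsto_exp_neg_atTop_nhds_zero.mul Real.tendsto_exp_neg_atTop_nhds_zero
    rw [mul_zero] at this
    refine this.congr fun u => ?_
    rw [← Real.exp_add]; ring_nf
  have h1 := (h0.div_const 2).neg
  simpa using h1

lemma myint (a : ℝ) : ∫ s in Set.Ioi a, Real.exp (-2*s) = Real.exp (-2*a)/2 := by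
  have h : ∀ t ∈ Set.Ici a, HasDerivAt (fun u : ℝ => -(Real.exp (-2*u)/2)) (Real.exp (-2*t)) t := by
    intro t _
    have h1 : HasDerivAt (fun u : ℝ => -2*u) (-2) t := by
      simpa using (hasDerivAt_id t).const_mul (-2 : ℝ)
    have h2 := (h1.exp.div_const 2).neg
    have h3 : Real.exp (-2*t) = -(Real.exp (-2*t) * -2/2) := by ring
    rw [h3]; exact h2
  have hint : IntegrableOn (fun s : ℝ => Real.exp (-2*s)) (Set.Ioi a) :=
    exp_neg_integrableOn_Ioi a (by norm_num : (0:ℝ) < 2)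
  have := integral_Ioi_of_hasDerivAt_of_tendsto' h hint myexp2_tendsto
  rw [this]; ring

lemma myintC (a : ℝ) (c : ℂ) :
    ∫ s in Set.Ioi a, c * (Real.exp (-2*s) : ℂ) = c * ((Real.exp (-2*a)/2 : ℝ) : ℂ) := by
  rw [MeasureTheory.integral_const_mul]
  have hi : IntegrableOn (fun s : ℝ => Real.exp (-2*s)) (Set.Ioi a) :=
    exp_neg_integrableOn_Ioi a (by norm_num : (0:ℝ) < 2)
  have := (Complex.ofRealCLM.integral_comp_comm hi).symm
  simp only [Complex.ofRealCLM_apply] at this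
  rw [← this, myint]

theorem stmt14 (A B C Abar Bbar Cbar M Mbar : ℂ)
    (hA : A = I) (hB : B = 1) (hC : C = I)
    (hAbar : Abar = -I) (hBbar : Bbar = 1) (hCbar : Cbar = -I)
    (hM : M = -I / 2) (hMbar : Mbar = I / 2)
    (Ω Ωbar : ℝ → ℂ)
    (hΩ : ∀ y, Ω y = C * Complex.exp (I * A * y) * B)
    (hΩbar : ∀ y, Ωbar y = Cbar * Complex.exp (-(I * Abar * y)) * Bbar)
    (Γbar : ℝ → ℂ)
    (hΓbar : ∀ x, Γbar x = 1 - Complex.exp (-(I * Abar * x)) * Mbar * A *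
      Complex.exp (2 * I * A * x) * M * Complex.exp (-(I * Abar * x)))
    (K₁ : ℝ → ℝ → ℂ)
    (hK₁ : ∀ x y, K₁ x y =
      -Cbar * Complex.exp (-(I * Abar * x)) * (Γbar x)⁻¹ * Complex.exp (-(I * Abar * y)) * Bbar) :
    ∀ x y : ℝ, x < y →
      K₁ x y + Ωbar (x + y)
        + I * ∫ z in Set.Ioi x, ∫ s in Set.Ioi x, K₁ x z * deriv Ω (z + s) * Ωbar (s + y) = 0 := by
  subst hA hB hC hAbar hBbar hCbar hM hMbar
  intro x y _
  have c1 : ∀ t : ℝ, Complex.exp (-(t : ℂ)) = ((Real.exp (-t) : ℝ) : ℂ) := by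
    intro t; rw [← Complex.ofReal_neg, Complex.ofReal_exp]
  have hΩfun : Ω = fun t : ℝ => I * Complex.exp (-(t : ℂ)) := by
    funext t
    rw [hΩ]
    norm_num [mul_assoc, Complex.I_mul_I]
  have hderiv : ∀ t : ℝ, deriv Ω t = -I * Complex.exp (-(t : ℂ)) := by
    intro t
    have h1 : HasDerivAt (fun w : ℂ => I * Complex.exp (-w)) (I * (Complex.exp (-(t:ℂ)) * -1)) (t:ℝ) :=
      (((hasDerivAt_id ((t:ℝ):ℂ)).neg).cexp.const_mul I)
    have h2 := h1.comp_ofReal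
    rw [hΩfun, h2.deriv]
    ring
  have hK : ∀ z : ℝ, K₁ x z = I * (Γbar x)⁻¹ * Complex.exp (-(x:ℂ)) * Complex.exp (-(z:ℂ)) := by
    intro z
    rw [hK₁]
    norm_num [mul_assoc, Complex.I_mul_I]
    ring
  have hOb : ∀ t : ℝ, Ωbar t = -I * Complex.exp (-(t:ℂ)) := by
    intro t
    rw [hΩbar]
    norm_num [mul_assoc, Complex.I_mul_I]
  set Cc : ℂ := -I * (Γbar x)⁻¹ * ((Real.exp (-x) : ℝ) : ℂ) * ((Real.exp (-y) : ℝ) : ℂ) with hCc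
  have hpt : ∀ z s : ℝ, K₁ x z * deriv Ω (z + s) * Ωbar (s + y)
      = Cc * ((Real.exp (-2*z) : ℝ) : ℂ) * ((Real.exp (-2*s) : ℝ) : ℂ) := by
    intro z s
    rw [hK z, hderiv (z+s), hOb (s+y), hCc, c1 x, c1 z, c1 (z+s), c1 (s+y)]
    rw [show -(z+s) = -z + -s by ring, show -(s+y) = -s + -y by ring,
        show (-2:ℝ)*z = -z + -z by ring, show (-2:ℝ)*s = -s + -s by ring,
        Real.exp_add, Real.exp_add, Real.exp_add, Real.exp_add]
    push_cast
    linear_combination (I * (Γbar x)⁻¹ * Complex.exp (-(x:ℂ)) * Complex.exp (-(y:ℂ))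
      * Complex.exp (-(z:ℂ))^2 * Complex.exp (-(s:ℂ))^2) * Complex.I_sq
  have hinner : ∀ z : ℝ, (∫ s in Set.Ioi x, K₁ x z * deriv Ω (z + s) * Ωbar (s + y))
      = Cc * ((Real.exp (-2*x)/2 : ℝ) : ℂ) * ((Real.exp (-2*z) : ℝ) : ℂ) := by
    intro z
    simp_rw [hpt z]
    rw [myintC x (Cc * ((Real.exp (-2*z) : ℝ) : ℂ))]
    ring
  have houter : (∫ z in Set.Ioi x, ∫ s in Set.Ioi x, K₁ x z * deriv Ω (z + s) * Ωbar (s + y))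
      = Cc * ((Real.exp (-2*x)/2 : ℝ) : ℂ) * ((Real.exp (-2*x)/2 : ℝ) : ℂ) := by
    simp_rw [hinner]
    rw [myintC x (Cc * ((Real.exp (-2*x)/2 : ℝ) : ℂ))]
  rw [houter, hK y, hOb (x+y)]
  have hΓ : Γbar x = 1 - I/4 * ((Real.exp (-x) : ℝ) : ℂ)^4 := by
    rw [hΓbar]
    norm_num [mul_assoc, Complex.I_mul_I]
    rw [show (-(2*(x:ℂ))) = -(x:ℂ) + -(x:ℂ) by ring, Complex.exp_add]
    linear_combination (-(Complex.I/4) * Complex.exp (-(x:ℂ))^4) * Complex.I_sq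
  have hGne : (1 - I/4 * Complex.exp (-(x:ℂ))^4) ≠ 0 := by
    rw [c1 x, show ((((Real.exp (-x)):ℝ):ℂ))^4 = ((Real.exp (-x)^4 : ℝ) : ℂ) by push_cast; ring]
    generalize (Real.exp (-x))^4 = s0
    intro h
    have h2 := congrArg Complex.re h
    simp [Complex.ext_iff] at h2
  have hΓne : Γbar x ≠ 0 := by
    rw [hΓ, show ((Real.exp (-x) : ℝ) : ℂ) = Complex.exp (-(x:ℂ)) from (c1 x).symm]
    exact hGne
  rw [hCc, hΓ, c1 x, c1 y, c1 (x+y)]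
  rw [show -(x+y) = -x + -y by ring, Real.exp_add, show (-2:ℝ)*x = -x + -x by ring, Real.exp_add]
  push_cast
  have h4 : (4 - I * Complex.exp (-(x:ℂ))^4) ≠ 0 := by
    intro h
    apply hGne
    linear_combination h / 4
  have h16 : (16 - I * Complex.exp (-(x:ℂ))^4 * 4) ≠ 0 := by
    intro h
    apply hGne
    linear_combination h / 16
  field_simp [hGne, h4, h16]
  ring
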